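/- arXiv:1901.08584 — 3 statements merged into one kernel-verified Lean document; each statement's English description precedes it below -/
import Mathlib

section
/- For symmetric positive semidefinite matrices A, B ∈ R^{n×n} with B ⪰ A and B invertible, we have P_A B^{-1} P_A ⪯ A^†, where A^† is the Moore–Penrose pseudoinverse and P_A = A^{1/2} A^† A^{1/2} is the orthogonal projection onto the column space of A. -/
open Matrix
noncomputable def Matrix.PosSemidef.sqrt {n : Type*} {𝕜 : Type*} [Fintype n] [RCLike 𝕜] [PartialOrder 𝕜]
    [DecidableEq n] {A : Matrix n n 𝕜} (hA : A.PosSemidef) : Matrix n n 𝕜 :=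
  hA.1.eigenvectorUnitary.1 * diagonal ((↑) ∘ (√·) ∘ hA.1.eigenvalues) *
    (star hA.1.eigenvectorUnitary : Matrix n n 𝕜)

theorem psd_sqrt_mul_self_aux {n : ℕ} {A : Matrix (Fin n) (Fin n) ℝ} (hA : A.PosSemidef) :
    hA.sqrt * hA.sqrt = A := by
  have hU : (star hA.1.eigenvectorUnitary : Matrix (Fin n) (Fin n) ℝ) * hA.1.eigenvectorUnitary.1 = 1 :=
    Unitary.coe_star_mul_self _
  have hsp := hA.1.spectral_theorem
  rw [Unitary.conjStarAlgAut_apply] at hsp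
  unfold Matrix.PosSemidef.sqrt
  conv_rhs => rw [hsp]
  calc _ = hA.1.eigenvectorUnitary.1 * diagonal ((↑) ∘ (√·) ∘ hA.1.eigenvalues) *
        ((star hA.1.eigenvectorUnitary : Matrix (Fin n) (Fin n) ℝ) * hA.1.eigenvectorUnitary.1) *
        diagonal ((↑) ∘ (√·) ∘ hA.1.eigenvalues) * (star hA.1.eigenvectorUnitary : Matrix (Fin n) (Fin n) ℝ) := by
          simp only [Matrix.mul_assoc]
          rfl
    _ = _ := by
      rw [hU, Matrix.mul_one, Matrix.mul_assoc _ (diagonal _) (diagonal _), diagonal_mul_diagonal]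
      congr 3
      funext i
      simp [Real.mul_self_sqrt (hA.eigenvalues_nonneg i)]

theorem psd_sqrt_herm_aux {n : ℕ} {A : Matrix (Fin n) (Fin n) ℝ} (hA : A.PosSemidef) :
    hA.sqrtᴴ = hA.sqrt := by
  unfold Matrix.PosSemidef.sqrt
  rw [conjTranspose_mul, conjTranspose_mul, diagonal_conjTranspose, star_eq_conjTranspose,
    conjTranspose_conjTranspose, Matrix.mul_assoc]
  congr 2

/-- For symmetric PSD matrices `A, B` with `B ⪰ A` and `B` invertible,
`P_A B⁻¹ P_A ⪯ A†` where `A†` (here `Ad`, characterized by the four Moore–Penrose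
conditions) is the pseudoinverse and `P_A = A^{1/2} A† A^{1/2}`. -/
theorem stmt_1 (n : ℕ) (A B Ad : Matrix (Fin n) (Fin n) ℝ)
    (hA : A.PosSemidef) (hB : B.PosSemidef) (hBA : (B - A).PosSemidef)
    (hBinv : IsUnit B.det)
    (h1 : A * Ad * A = A) (h2 : Ad * A * Ad = Ad)
    (h3 : (A * Ad)ᵀ = A * Ad) (h4 : (Ad * A)ᵀ = Ad * A) :
    (Ad - (hA.sqrt * Ad * hA.sqrt) * B⁻¹ * (hA.sqrt * Ad * hA.sqrt)).PosSemidef := by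
  have hAt : Aᵀ = A := by
    have h := hA.isHermitian
    rwa [Matrix.IsHermitian, conjTranspose_eq_transpose_of_trivial] at h
  -- basic symmetry facts
  have f1 : A * Adᵀ = Ad * A := by
    calc A * Adᵀ = Aᵀ * Adᵀ := by rw [hAt]
      _ = (Ad * A)ᵀ := (transpose_mul _ _).symm
      _ = Ad * A := h4
  have f2 : Adᵀ * A = A * Ad := by
    calc Adᵀ * A = Adᵀ * Aᵀ := by rw [hAt]
      _ = (A * Ad)ᵀ := (transpose_mul _ _).symm
      _ = A * Ad := h3
  have sym1 : (A * Adᵀ)ᵀ = A * Adᵀ := by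
    rw [transpose_mul, transpose_transpose, hAt, ← f1]
  have sym2 : (Adᵀ * A)ᵀ = Adᵀ * A := by
    rw [transpose_mul, transpose_transpose, hAt, ← f2]
  have t1 : A * Adᵀ * A = A := by
    have h := congrArg Matrix.transpose h1
    rw [transpose_mul, transpose_mul, hAt] at h
    rwa [← Matrix.mul_assoc] at h
  have g1 : A * Ad = A * Adᵀ := by
    calc A * Ad = A * Adᵀ * A * Ad := by rw [t1]
      _ = (A * Adᵀ) * (A * Ad) := by rw [Matrix.mul_assoc]
      _ = (A * Adᵀ)ᵀ * (A * Ad)ᵀ := by rw [sym1, h3]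
      _ = ((A * Ad) * (A * Adᵀ))ᵀ := (transpose_mul _ _).symm
      _ = ((A * Ad * A) * Adᵀ)ᵀ := by rw [Matrix.mul_assoc (A * Ad) A Adᵀ]
      _ = (A * Adᵀ)ᵀ := by rw [h1]
      _ = A * Adᵀ := sym1
  have g2 : Ad * A = Adᵀ * A := by
    calc Ad * A = Ad * (A * Adᵀ * A) := by rw [t1]
      _ = (Ad * A) * (Adᵀ * A) := by
          rw [Matrix.mul_assoc A Adᵀ A, ← Matrix.mul_assoc Ad A (Adᵀ * A)]
      _ = (Ad * A)ᵀ * (Adᵀ * A)ᵀ := by rw [h4, sym2]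
      _ = ((Adᵀ * A) * (Ad * A))ᵀ := (transpose_mul _ _).symm
      _ = (Adᵀ * (A * Ad * A))ᵀ := by
          rw [Matrix.mul_assoc Adᵀ A (Ad * A), ← Matrix.mul_assoc A Ad A]
      _ = (Adᵀ * A)ᵀ := by rw [h1]
      _ = Adᵀ * A := sym2
  have hAds : Adᵀ = Ad := by
    have h := congrArg Matrix.transpose h2
    rw [transpose_mul, transpose_mul, ← Matrix.mul_assoc] at h
    -- h : Adᵀ * Aᵀ * Adᵀ = Adᵀ  (after assoc); careful with hAt
    rw [hAt] at h
    calc Adᵀ = Adᵀ * A * Adᵀ := h.symm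
      _ = (Ad * A) * Adᵀ := by rw [← g2]
      _ = Ad * (A * Adᵀ) := by rw [Matrix.mul_assoc]
      _ = Ad * (A * Ad) := by rw [← g1]
      _ = Ad * A * Ad := by rw [Matrix.mul_assoc]
      _ = Ad := h2
  have hcomm : A * Ad = Ad * A := by
    calc A * Ad = (A * Ad)ᵀ := h3.symm
      _ = Adᵀ * Aᵀ := transpose_mul _ _
      _ = Ad * A := by rw [hAds, hAt]
  set S := hA.sqrt with hSdef
  have hS2 : S * S = A := psd_sqrt_mul_self_aux hA
  have hSH : Sᴴ = S := psd_sqrt_herm_aux hA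
  have hSt : Sᵀ = S := by
    rwa [conjTranspose_eq_transpose_of_trivial] at hSH
  have hSA : S * A = A * S := by
    rw [← hS2, ← Matrix.mul_assoc, Matrix.mul_assoc]
  -- A * Ad * S = S
  have hz : (A * Ad - 1) * A = 0 := by
    rw [sub_mul, one_mul, h1, sub_self]
  have hN : ((A * Ad - 1) * S) * ((A * Ad - 1) * S)ᵀ = 0 := by
    rw [transpose_mul, hSt, Matrix.mul_assoc (A * Ad - 1) S (S * (A * Ad - 1)ᵀ),
      ← Matrix.mul_assoc S S ((A * Ad - 1)ᵀ), hS2, ← Matrix.mul_assoc, hz, zero_mul]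
  have hN0 : (A * Ad - 1) * S = 0 := by
    have h := Matrix.self_mul_conjTranspose_eq_zero (A := (A * Ad - 1) * S)
    rw [conjTranspose_eq_transpose_of_trivial] at h
    exact h.mp hN
  have hAAdS : A * Ad * S = S := by
    have := hN0
    rw [sub_mul, one_mul, sub_eq_zero] at this
    rw [Matrix.mul_assoc] at this ⊢
    exact this
  have hSAdA : S * (Ad * A) = S := by
    have h := congrArg Matrix.transpose hAAdS
    rw [transpose_mul, transpose_mul, hSt, hAds, hAt] at h
    exact h
  -- the projection identity  S * Ad * S = A * Ad
  have hPsym : (S * Ad * S)ᵀ = S * Ad * S := by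
    rw [transpose_mul, transpose_mul, hSt, hAds, Matrix.mul_assoc]
  have hQP : (A * Ad) * (S * Ad * S) = S * Ad * S := by
    calc (A * Ad) * (S * Ad * S) = ((A * Ad * S) * Ad) * S := by
          rw [Matrix.mul_assoc (A * Ad) S Ad, ← Matrix.mul_assoc (A * Ad) (S * Ad) S,
            ← Matrix.mul_assoc (A * Ad) S Ad]
      _ = S * Ad * S := by rw [hAAdS]
  have hPQ : (S * Ad * S) * (A * Ad) = A * Ad := by
    calc (S * Ad * S) * (A * Ad) = S * Ad * (S * A) * Ad := by
          rw [Matrix.mul_assoc (S * Ad) S (A * Ad), ← Matrix.mul_assoc S A Ad,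
            ← Matrix.mul_assoc (S * Ad) (S * A) Ad]
      _ = S * Ad * (A * S) * Ad := by rw [hSA]
      _ = (S * (Ad * A)) * (S * Ad) := by
          simp only [Matrix.mul_assoc]
      _ = S * (S * Ad) := by rw [hSAdA]
      _ = (S * S) * Ad := by rw [Matrix.mul_assoc]
      _ = A * Ad := by rw [hS2]
  have hPeqQ : S * Ad * S = A * Ad := by
    have h := congrArg Matrix.transpose hQP
    rw [transpose_mul, hPsym, h3] at h
    -- h : (S * Ad * S) * (A * Ad) = S * Ad * S
    rw [hPQ] at h
    exact h.symm
  -- positive definiteness of B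
  have hBpd : B.PosDef := by
    exact hB.posDef_iff_isUnit.mpr ((isUnit_iff_isUnit_det B).mpr hBinv)
  haveI : Invertible B := B.invertibleOfIsUnitDet hBinv
  -- conjTranspose facts
  have hAdH : Adᴴ = Ad := by rw [conjTranspose_eq_transpose_of_trivial, hAds]
  have hQH : (A * Ad)ᴴ = A * Ad := by
    rw [conjTranspose_eq_transpose_of_trivial, h3]
  -- block matrix is PSD
  set R := hBA.sqrt with hRdef
  have hR2 : R * R = B - A := psd_sqrt_mul_self_aux hBA
  have hRH : Rᴴ = R := psd_sqrt_herm_aux hBA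
  have hblock : (fromBlocks B (A * Ad) (A * Ad)ᴴ Ad).PosSemidef := by
    have hrepr : fromBlocks B (A * Ad) (A * Ad)ᴴ Ad =
        (fromBlocks R 0 0 0)ᴴ * (fromBlocks R 0 0 0) +
          (fromBlocks S (S * Ad) 0 0)ᴴ * (fromBlocks S (S * Ad) 0 0) := by
      rw [fromBlocks_conjTranspose, fromBlocks_conjTranspose, fromBlocks_multiply,
        fromBlocks_multiply, fromBlocks_add, hQH]
      refine fromBlocks_inj.mpr ⟨?_, ?_, ?_, ?_⟩ <;>
        simp only [conjTranspose_zero, conjTranspose_mul, hRH, hSH, hAdH,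
          Matrix.zero_mul, Matrix.mul_zero, add_zero, zero_add]
      · rw [hR2, hS2, sub_add_cancel]
      · rw [← Matrix.mul_assoc, hS2]
      · rw [Matrix.mul_assoc, hS2, hcomm]
      · rw [Matrix.mul_assoc Ad S (S * Ad), ← Matrix.mul_assoc S S Ad, hS2,
          ← Matrix.mul_assoc, h2]
    rw [hrepr]
    exact (posSemidef_conjTranspose_mul_self _).add (posSemidef_conjTranspose_mul_self _)
  have hschur := (PosDef.fromBlocks₁₁ (A * Ad) Ad hBpd).mp hblock
  rw [hQH] at hschur
  rw [hPeqQ]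
  exact hschur
end

section
/- Let x₁,…,xₙ be unit vectors in R^d with Gram matrix K, and let H^∞_{ij} = K_{ij}(π − arccos(K_{ij}))/(2π). Then H^∞ ⪰ K/4 and for every positive integer l, H^∞ ⪰ K^{∘2l}/(2π(2l−1)²). -/
noncomputable section
namespace Stmt5

/-- b k = C(2k,k)/4^k, defined recursively. -/
def b : ℕ → ℝ
  | 0 => 1
  | k + 1 => b k * (2 * k + 1) / (2 * k + 2)

lemma b_zero : b 0 = 1 := rfl

lemma b_succ (k : ℕ) : b (k + 1) = b k * (2 * k + 1) / (2 * k + 2) := rfl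

lemma b_pos (k : ℕ) : 0 < b k := by
  induction k with
  | zero => exact one_pos
  | succ k ih => rw [b_succ]; positivity

lemma b_le_one (k : ℕ) : b k ≤ 1 := by
  induction k with
  | zero => exact le_refl 1
  | succ k ih =>
    rw [b_succ, div_le_one (by positivity)]
    calc b k * (2 * (k:ℝ) + 1) ≤ 1 * (2 * k + 1) := by gcongr
      _ ≤ 2 * k + 2 := by norm_num

lemma one_le (k : ℕ) : 1 ≤ (2 * (k:ℝ) + 1) * b k := by
  induction k with
  | zero => simp [b_zero]
  | succ k ih =>
    have hb := b_pos k
    rw [b_succ]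
    push_cast
    rw [ (by ring : (2 * ((k:ℝ) + 1) + 1) * (b k * (2 * ↑k + 1) / (2 * ↑k + 2)) = ((2 * ((k:ℝ) + 1) + 1) * (b k * (2 * ↑k + 1))) / (2 * ↑k + 2)), le_div_iff₀ (by positivity)]
    nlinarith

lemma sq_le (k : ℕ) : (2 * (k:ℝ) + 1) * (b k)^2 ≤ 1 := by
  induction k with
  | zero => simp [b_zero]
  | succ k ih =>
    have hb := b_pos k
    rw [b_succ]
    push_cast
    rw [div_pow, (by ring : (2 * ((k:ℝ) + 1) + 1) * ((b k * (2 * ↑k + 1)) ^ 2 / (2 * ↑k + 2) ^ 2) = ((2 * ((k:ℝ) + 1) + 1) * (b k * (2 * ↑k + 1)) ^ 2) / (2 * ↑k + 2) ^ 2), div_le_one (by positivity)]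
    nlinarith [sq_nonneg (b k), mul_pos hb hb]

lemma sym_sum (m : ℕ) :
    ∑ i ∈ Finset.range (m+1), (2*(i:ℝ)+1) * (b i * b (m-i))
      = ((m:ℝ)+1) * ∑ i ∈ Finset.range (m+1), b i * b (m-i) := by
  have h1 := Finset.sum_range_reflect (fun i => (2*(i:ℝ)+1) * (b i * b (m-i))) (m+1)
  have h2 : ∑ j ∈ Finset.range (m+1), (2*((m:ℝ)-(j:ℝ))+1) * (b (m-j) * b j)
      = ∑ j ∈ Finset.range (m+1), (2*(j:ℝ)+1) * (b j * b (m-j)) := by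
    rw [← h1]
    apply Finset.sum_congr rfl
    intro j hj
    rw [Finset.mem_range] at hj
    have hj' : j ≤ m := Nat.lt_succ_iff.mp hj
    have e1 : m + 1 - 1 - j = m - j := by omega
    rw [e1, Nat.sub_sub_self hj', Nat.cast_sub hj']
  have h3 : (2:ℝ) * (∑ i ∈ Finset.range (m+1), (2*(i:ℝ)+1) * (b i * b (m-i)))
      = ∑ i ∈ Finset.range (m+1), (2*(m:ℝ)+2) * (b i * b (m-i)) := by
    rw [two_mul]
    nth_rewrite 1 [← h2]
    rw [← Finset.sum_add_distrib]
    apply Finset.sum_congr rfl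
    intro j hj
    ring
  rw [← Finset.mul_sum] at h3
  linarith

/-- convolution identity : ∑_{i+j=k} b i b j = 1 -/
lemma conv (k : ℕ) : ∑ i ∈ Finset.range (k+1), b i * b (k - i) = 1 := by
  induction k with
  | zero => simp [b_zero]
  | succ k ih =>
    have hA : ∑ i ∈ Finset.range (k+2), 2*(i:ℝ) * (b i * b (k+1-i))
        = ∑ i ∈ Finset.range (k+1), (2*(i:ℝ)+1) * (b i * b (k-i)) := by
      rw [Finset.sum_range_succ' (fun i => 2*(i:ℝ) * (b i * b (k+1-i))) (k+1)]
      simp only [Nat.cast_zero, mul_zero, zero_mul, add_zero]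
      apply Finset.sum_congr rfl
      intro i _
      have e1 : k + 1 - (i + 1) = k - i := by omega
      rw [e1, b_succ i]
      push_cast
      have h2 : (2*(i:ℝ)+2) ≠ 0 := by positivity
      field_simp
    have hB : ∑ i ∈ Finset.range (k+2), 2*(i:ℝ) * (b i * b (k+1-i))
        = ∑ i ∈ Finset.range (k+2), (2*(i:ℝ)+1) * (b i * b (k+1-i))
          - ∑ i ∈ Finset.range (k+2), b i * b (k+1-i) := by
      rw [← Finset.sum_sub_distrib]
      apply Finset.sum_congr rfl
      intro i _
      ring
    have hs1 := sym_sum (k+1)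
    have hs2 := sym_sum k
    push_cast at hs1
    rw [ih] at hs2
    -- hA, hB, hs1, hs2 combine
    have hk : (0:ℝ) < (k:ℝ) + 1 := by positivity
    set T := ∑ i ∈ Finset.range (k+1+1), b i * b (k+1-i) with hT
    have : ((k:ℝ)+1) * T = ((k:ℝ)+1) * 1 := by
      rw [mul_one]
      nlinarith [hA, hB, hs1, hs2]
    exact mul_left_cancel₀ (ne_of_gt hk) this

/-- the arcsin coefficients -/
def a (k : ℕ) : ℝ := b k / (2 * k + 1)

lemma a_pos (k : ℕ) : 0 < a k := div_pos (b_pos k) (by positivity)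

lemma a_lb (k : ℕ) : 1 / (2 * (k:ℝ) + 1)^2 ≤ a k := by
  have h := one_le k
  rw [a, div_le_div_iff₀ (by positivity) (by positivity)]
  nlinarith

lemma b_le_sqrt (k : ℕ) : b k ≤ 1 / Real.sqrt (2 * (k:ℝ) + 1) := by
  have h := sq_le k
  have hb := (b_pos k).le
  rw [le_div_iff₀ (Real.sqrt_pos.mpr (by positivity))]
  nlinarith [Real.sq_sqrt (show (0:ℝ) ≤ 2*(k:ℝ)+1 by positivity),
    Real.sqrt_nonneg (2*(k:ℝ)+1), sq_nonneg (b k * Real.sqrt (2*(k:ℝ)+1) - 1)]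

lemma a_ub (k : ℕ) : a k ≤ 1 / (((k:ℝ) + 1) * Real.sqrt ((k:ℝ) + 1)) := by
  have h1 : ((k:ℝ) + 1) ≤ 2 * (k:ℝ) + 1 := by linarith [Nat.cast_nonneg (α := ℝ) k]
  have h2 : Real.sqrt ((k:ℝ)+1) ≤ Real.sqrt (2*(k:ℝ)+1) := Real.sqrt_le_sqrt h1
  have h3 : (0:ℝ) < Real.sqrt ((k:ℝ)+1) := Real.sqrt_pos.mpr (by positivity)
  have h4 : (0:ℝ) < Real.sqrt (2*(k:ℝ)+1) := Real.sqrt_pos.mpr (by positivity)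
  calc a k = b k / (2*(k:ℝ)+1) := rfl
    _ ≤ (1 / Real.sqrt (2*(k:ℝ)+1)) / (2*(k:ℝ)+1) :=
        by gcongr
           exact b_le_sqrt k
    _ = 1 / ((2*(k:ℝ)+1) * Real.sqrt (2*(k:ℝ)+1)) := by
        rw [div_div]; ring_nf
    _ ≤ 1 / (((k:ℝ) + 1) * Real.sqrt ((k:ℝ) + 1)) := by
        gcongr <;> positivity

lemma summable_a : Summable a := by
  have base : Summable (fun n : ℕ => ((n:ℝ)) ^ (-(3:ℝ)/2)) := by
    rw [Real.summable_nat_rpow]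
    norm_num
  have shifted : Summable (fun n : ℕ => (((n:ℝ)+1)) ^ (-(3:ℝ)/2)) := by
    apply (base.comp_injective (add_left_injective 1)).congr
    intro n
    simp only [Function.comp_apply]
    norm_num
  apply Summable.of_nonneg_of_le (fun k => (a_pos k).le) _ shifted
  intro k
  have hpos : (0:ℝ) < (k:ℝ) + 1 := by positivity
  have : (((k:ℝ)+1)) ^ (-(3:ℝ)/2) = 1 / (((k:ℝ) + 1) * Real.sqrt ((k:ℝ) + 1)) := by
    rw [show (-(3:ℝ)/2) = -(1 + 1/2) by norm_num, Real.rpow_neg hpos.le,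
      Real.rpow_add hpos, Real.rpow_one, Real.sqrt_eq_rpow, one_div]
    rw [one_div]
  rw [this]
  exact a_ub k

lemma summable_b_mul_pow {y : ℝ} (hy : |y| < 1) :
    Summable (fun k => ‖b k * y ^ k‖) := by
  apply Summable.of_nonneg_of_le (fun k => norm_nonneg _) _
    (summable_geometric_of_lt_one (abs_nonneg y) hy)
  intro k
  rw [norm_mul, norm_pow, Real.norm_eq_abs, Real.norm_eq_abs,
    abs_of_pos (b_pos k)]
  calc b k * |y| ^ k ≤ 1 * |y| ^ k := by gcongr; exact b_le_one k
    _ = |y| ^ k := one_mul _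

/-- generating function of central binomial coefficients -/
lemma gen_fun {y : ℝ} (h0 : 0 ≤ y) (h1 : y < 1) :
    ∑' k, b k * y ^ k = 1 / Real.sqrt (1 - y) := by
  have hy : |y| < 1 := by rwa [abs_of_nonneg h0]
  have hsum := summable_b_mul_pow hy
  have hsq : (∑' k, b k * y ^ k) * (∑' k, b k * y ^ k) = 1 / (1 - y) := by
    rw [tsum_mul_tsum_eq_tsum_sum_range_of_summable_norm hsum hsum]
    have : ∀ n : ℕ, ∑ k ∈ Finset.range (n+1), (b k * y ^ k) * (b (n-k) * y ^ (n-k))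
        = y ^ n := by
      intro n
      have : ∀ k ∈ Finset.range (n+1), (b k * y ^ k) * (b (n-k) * y ^ (n-k))
          = (b k * b (n-k)) * y ^ n := by
        intro k hk
        rw [Finset.mem_range] at hk
        have : y ^ k * y ^ (n - k) = y ^ n := by
          rw [← pow_add]
          congr 1
          omega
        calc (b k * y ^ k) * (b (n-k) * y ^ (n-k))
            = (b k * b (n-k)) * (y ^ k * y ^ (n-k)) := by ring
          _ = (b k * b (n-k)) * y ^ n := by rw [this]
      rw [Finset.sum_congr rfl this, ← Finset.sum_mul, conv, one_mul]
    rw [tsum_congr this, tsum_geometric_of_lt_one h0 h1, one_div]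
  have hnn : 0 ≤ ∑' k, b k * y ^ k :=
    tsum_nonneg fun k => mul_nonneg (b_pos k).le (pow_nonneg h0 k)
  have h1y : (0:ℝ) < 1 - y := by linarith
  have hspos : 0 < Real.sqrt (1-y) := Real.sqrt_pos.mpr h1y
  have key : Real.sqrt (1-y) * (∑' k, b k * y ^ k) = 1 := by
    have h2 : (Real.sqrt (1-y) * (∑' k, b k * y ^ k))
        * (Real.sqrt (1-y) * (∑' k, b k * y ^ k)) = 1 := by
      have hss : Real.sqrt (1-y) * Real.sqrt (1-y) = 1 - y :=
        Real.mul_self_sqrt h1y.le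
      calc (Real.sqrt (1-y) * (∑' k, b k * y ^ k))
            * (Real.sqrt (1-y) * (∑' k, b k * y ^ k))
          = (Real.sqrt (1-y) * Real.sqrt (1-y))
            * ((∑' k, b k * y ^ k) * (∑' k, b k * y ^ k)) := by ring
        _ = (1 - y) * (1 / (1 - y)) := by rw [hss, hsq]
        _ = 1 := by field_simp
    rcases mul_self_eq_one_iff.mp h2 with h | h
    · exact h
    · exfalso
      have : 0 ≤ Real.sqrt (1-y) * (∑' k, b k * y ^ k) :=
        mul_nonneg hspos.le hnn
      linarith
  rw [eq_div_iff (ne_of_gt hspos)]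
  linarith [key]

open MeasureTheory intervalIntegral in
lemma arcsin_eq_Ico {x : ℝ} (h0 : 0 ≤ x) (h1 : x < 1) :
    Real.arcsin x = ∑' k, a k * x ^ (2 * k + 1) := by
  -- FTC
  have hderiv : ∀ t ∈ Set.uIcc (0:ℝ) x,
      HasDerivAt Real.arcsin (1 / Real.sqrt (1 - t^2)) t := by
    intro t ht
    rw [Set.uIcc_of_le h0] at ht
    exact Real.hasDerivAt_arcsin (by intro h; rw [h] at ht; linarith [ht.1])
      (by intro h; rw [h] at ht; linarith [ht.2])
  have hcont : ContinuousOn (fun t : ℝ => 1 / Real.sqrt (1 - t^2))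
      (Set.uIcc (0:ℝ) x) := by
    apply ContinuousOn.div continuousOn_const
    · exact (Real.continuous_sqrt.comp (by continuity)).continuousOn
    · intro t ht
      rw [Set.uIcc_of_le h0] at ht
      have : 0 < 1 - t^2 := by nlinarith [ht.1, ht.2]
      exact ne_of_gt (Real.sqrt_pos.mpr this)
  have hint : IntervalIntegrable (fun t : ℝ => 1 / Real.sqrt (1 - t^2))
      volume 0 x := hcont.intervalIntegrable
  have hFTC : ∫ t in (0:ℝ)..x, 1 / Real.sqrt (1 - t^2) = Real.arcsin x := by
    rw [integral_eq_sub_of_hasDerivAt hderiv hint, Real.arcsin_zero, sub_zero]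
  -- pointwise series for the integrand on Ioc 0 x
  have hpt : ∀ t ∈ Set.Ioc (0:ℝ) x, 1 / Real.sqrt (1 - t^2)
      = ∑' k, b k * t ^ (2 * k) := by
    intro t ht
    have hy0 : 0 ≤ t^2 := sq_nonneg t
    have hy1 : t^2 < 1 := by nlinarith [ht.1, ht.2]
    rw [← gen_fun hy0 hy1]
    apply tsum_congr
    intro k
    rw [pow_mul]
  -- swap sum and integral
  have hswap : HasSum (fun k => ∫ t in Set.Ioc (0:ℝ) x, b k * t ^ (2*k))
      (∫ t in Set.Ioc (0:ℝ) x, ∑' k, b k * t ^ (2*k)) := by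
    apply hasSum_integral_of_summable_integral_norm
    · intro k
      exact (continuous_const.mul (continuous_pow (2*k))).integrableOn_Ioc
    · have heval : ∀ k : ℕ, ∫ t in Set.Ioc (0:ℝ) x, ‖b k * t ^ (2*k)‖
          = a k * x ^ (2*k+1) := by
        intro k
        have hnn : ∀ t : ℝ, ‖b k * t ^ (2*k)‖ = b k * t ^ (2*k) := by
          intro t
          rw [Real.norm_eq_abs, abs_of_nonneg]
          apply mul_nonneg (b_pos k).le
          rw [mul_comm, pow_mul]
          positivity
        simp_rw [hnn]
        rw [← integral_of_le h0, intervalIntegral.integral_const_mul,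
          integral_pow]
        simp only [zero_pow (by omega : 2*k+1 ≠ 0), sub_zero]
        rw [a]
        push_cast
        field_simp
      rw [funext heval]
      apply Summable.of_nonneg_of_le
        (fun k => mul_nonneg (a_pos k).le (by positivity)) _ summable_a
      intro k
      calc a k * x ^ (2*k+1) ≤ a k * 1 := by
            apply mul_le_mul_of_nonneg_left _ (a_pos k).le
            exact pow_le_one₀ h0 h1.le
        _ = a k := mul_one _
  -- put together
  have heq : ∫ t in Set.Ioc (0:ℝ) x, ∑' k, b k * t ^ (2*k)
      = Real.arcsin x := by
    rw [← hFTC, integral_of_le h0]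
    apply setIntegral_congr_fun measurableSet_Ioc
    intro t ht
    exact (hpt t ht).symm
  rw [heq] at hswap
  have heval2 : (fun k => ∫ t in Set.Ioc (0:ℝ) x, b k * t ^ (2*k))
      = fun k => a k * x ^ (2*k+1) := by
    funext k
    rw [← integral_of_le h0, intervalIntegral.integral_const_mul, integral_pow]
    simp only [zero_pow (by omega : 2*k+1 ≠ 0), sub_zero]
    rw [a]
    push_cast
    field_simp
  rw [heval2] at hswap
  exact hswap.tsum_eq.symm

lemma F_contOn : ContinuousOn (fun x : ℝ => ∑' k, a k * x ^ (2*k+1))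
    (Set.Icc (-1:ℝ) 1) := by
  rw [continuousOn_iff_continuous_restrict]
  apply continuous_tsum
    (f := fun (k : ℕ) (z : Set.Icc (-1:ℝ) 1) => a k * (z:ℝ) ^ (2*k+1))
    (u := a)
  · intro k
    exact continuous_const.mul (continuous_subtype_val.pow _)
  · exact summable_a
  · intro k z
    have hz : |(z:ℝ)| ≤ 1 := abs_le.mpr ⟨z.2.1, z.2.2⟩
    rw [Real.norm_eq_abs, abs_mul, abs_of_pos (a_pos k), abs_pow]
    calc a k * |(z:ℝ)| ^ (2*k+1) ≤ a k * 1 := by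
          apply mul_le_mul_of_nonneg_left _ (a_pos k).le
          exact pow_le_one₀ (abs_nonneg _) hz
      _ = a k := mul_one _

lemma arcsin_eq_series {x : ℝ} (hx : x ∈ Set.Icc (-1:ℝ) 1) :
    Real.arcsin x = ∑' k, a k * x ^ (2*k+1) := by
  -- first handle [0,1]
  have key : ∀ y : ℝ, y ∈ Set.Icc (0:ℝ) 1 →
      Real.arcsin y = ∑' k, a k * y ^ (2*k+1) := by
    intro y hy
    rcases lt_or_eq_of_le hy.2 with h | h
    · exact arcsin_eq_Ico hy.1 h
    · -- y = 1 : continuity argument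
      subst h
      have hne : (nhdsWithin (1:ℝ) (Set.Ico 0 1)).NeBot := by
        apply mem_closure_iff_nhdsWithin_neBot.mp
        rw [closure_Ico (by norm_num : (0:ℝ) ≠ 1)]
        exact ⟨zero_le_one, le_refl 1⟩
      have h1 : Filter.Tendsto Real.arcsin (nhdsWithin 1 (Set.Ico 0 1))
          (nhds (Real.arcsin 1)) :=
        (Real.continuous_arcsin.continuousAt).continuousWithinAt
      have h2 : Filter.Tendsto (fun x : ℝ => ∑' k, a k * x ^ (2*k+1))
          (nhdsWithin 1 (Set.Ico 0 1))
          (nhds (∑' k, a k * (1:ℝ) ^ (2*k+1))) := by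
        have := (F_contOn 1 ⟨by norm_num, le_refl 1⟩)
        exact this.mono_left
          (nhdsWithin_mono 1 (fun z hz => ⟨by linarith [hz.1], hz.2.le⟩))
      have h3 : Filter.Tendsto (fun x : ℝ => ∑' k, a k * x ^ (2*k+1))
          (nhdsWithin 1 (Set.Ico 0 1)) (nhds (Real.arcsin 1)) := by
        apply h1.congr'
        filter_upwards [self_mem_nhdsWithin] with z hz
        exact arcsin_eq_Ico hz.1 hz.2
      exact tendsto_nhds_unique h3 h2
  rcases le_or_gt 0 x with h | h
  · exact key x ⟨h, hx.2⟩
  · have hmx : -x ∈ Set.Icc (0:ℝ) 1 := ⟨by linarith, by linarith [hx.1]⟩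
    have := key (-x) hmx
    rw [Real.arcsin_neg] at this
    have hodd : ∀ k : ℕ, a k * (-x) ^ (2*k+1) = -(a k * x ^ (2*k+1)) := by
      intro k
      rw [Odd.neg_pow ⟨k, by ring⟩]
      ring
    rw [tsum_congr hodd, tsum_neg] at this
    linarith

open Finset in
lemma q_nonneg {d n : ℕ} (x : Fin n → EuclideanSpace ℝ (Fin d)) (v : Fin n → ℝ)
    (m : ℕ) :
    0 ≤ ∑ i, ∑ j, v i * v j * ((inner ℝ (x i) (x j) : ℝ)) ^ m := by
  have hinner : ∀ i j, (inner ℝ (x i) (x j) : ℝ) = ∑ c, x i c * x j c := by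
    intro i j
    simp [PiLp.inner_apply, RCLike.inner_apply, conj_trivial, mul_comm]
  have expand : ∀ i j, ((inner ℝ (x i) (x j) : ℝ)) ^ m
      = ∑ f ∈ Fintype.piFinset (fun _ : Fin m => (univ : Finset (Fin d))),
          ∏ t, (x i (f t) * x j (f t)) := by
    intro i j
    rw [hinner]
    calc (∑ c, x i c * x j c) ^ m = ∏ _t : Fin m, (∑ c, x i c * x j c) := by
          rw [prod_const, card_univ, Fintype.card_fin]
      _ = _ := prod_univ_sum _ _
  have main : ∑ f ∈ Fintype.piFinset (fun _ : Fin m => (univ : Finset (Fin d))),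
        (∑ i, v i * ∏ t, x i (f t)) ^ 2
      = ∑ i, ∑ j, v i * v j * ((inner ℝ (x i) (x j) : ℝ)) ^ m := by
    have hsq : ∀ f : Fin m → Fin d, (∑ i, v i * ∏ t, x i (f t)) ^ 2
        = ∑ i, ∑ j, v i * v j * ∏ t, (x i (f t) * x j (f t)) := by
      intro f
      rw [sq, Finset.sum_mul_sum]
      apply sum_congr rfl
      intro i _
      apply sum_congr rfl
      intro j _
      rw [prod_mul_distrib]
      ring
    rw [sum_congr rfl (fun f _ => hsq f), sum_comm]
    apply sum_congr rfl
    intro i _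
    rw [sum_comm]
    apply sum_congr rfl
    intro j _
    rw [expand i j, mul_sum]
  rw [← main]
  exact sum_nonneg fun f _ => sq_nonneg _


section Assembly

variable {n : ℕ} (K : Matrix (Fin n) (Fin n) ℝ)

/-- bound on quadratic forms of entrywise powers -/
lemma q_abs_le (habs : ∀ i j, |K i j| ≤ 1) (m : ℕ) (v : Fin n → ℝ) :
    |∑ i, ∑ j, v i * v j * K i j ^ m| ≤ (∑ i, |v i|) ^ 2 := by
  calc |∑ i, ∑ j, v i * v j * K i j ^ m|
      ≤ ∑ i, |∑ j, v i * v j * K i j ^ m| := Finset.abs_sum_le_sum_abs _ _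
    _ ≤ ∑ i, ∑ j, |v i * v j * K i j ^ m| := by
        apply Finset.sum_le_sum
        intro i _
        exact Finset.abs_sum_le_sum_abs _ _
    _ ≤ ∑ i, ∑ j, |v i| * |v j| := by
        apply Finset.sum_le_sum; intro i _
        apply Finset.sum_le_sum; intro j _
        rw [abs_mul, abs_mul]
        calc |v i| * |v j| * |K i j ^ m| ≤ |v i| * |v j| * 1 := by
              apply mul_le_mul_of_nonneg_left _ (by positivity)
              rw [abs_pow]
              exact pow_le_one₀ (abs_nonneg _) (habs i j)
          _ = |v i| * |v j| := mul_one _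
    _ = (∑ i, |v i|) ^ 2 := by rw [sq, Finset.sum_mul_sum]

lemma summable_aq (habs : ∀ i j, |K i j| ≤ 1) (v : Fin n → ℝ) :
    Summable (fun k => a k * ∑ i, ∑ j, v i * v j * K i j ^ (2*k+2)) := by
  apply Summable.of_norm_bounded (g := fun k => a k * (∑ i, |v i|) ^ 2)
    (summable_a.mul_right _)
  intro k
  rw [Real.norm_eq_abs, abs_mul, abs_of_pos (a_pos k)]
  exact mul_le_mul_of_nonneg_left (q_abs_le K habs (2*k+2) v) (a_pos k).le

end Assembly

end Stmt5


open Matrix Real Stmt5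

lemma herm_of_symm {n : ℕ} {M : Matrix (Fin n) (Fin n) ℝ}
    (h : ∀ i j, M i j = M j i) : M.IsHermitian :=
  Matrix.ext fun i j => by
    rw [Matrix.conjTranspose_apply, star_trivial]
    exact h j i

lemma quad_eq {n : ℕ} (M : Matrix (Fin n) (Fin n) ℝ) (v : Fin n → ℝ) :
    star v ⬝ᵥ (M *ᵥ v) = ∑ i, ∑ j, v i * v j * M i j := by
  simp only [dotProduct, Matrix.mulVec, Pi.star_apply, star_trivial,
    Finset.mul_sum]
  apply Finset.sum_congr rfl; intro i _
  apply Finset.sum_congr rfl; intro j _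
  ring

/-- For unit vectors with Gram matrix `K` and ReLU-kernel matrix `H^∞`,
`H^∞ ⪰ K/4` and for every `l ≥ 1`, `H^∞ ⪰ K^{∘2l}/(2π(2l−1)²)`. -/
theorem stmt_5 (d n : ℕ) (x : Fin n → EuclideanSpace ℝ (Fin d))
    (hx : ∀ i, ‖x i‖ = 1)
    (K H : Matrix (Fin n) (Fin n) ℝ)
    (hK : ∀ i j, K i j = inner ℝ (x i) (x j))
    (hH : ∀ i j, H i j = K i j * (π - arccos (K i j)) / (2 * π)) :
    (H - (1 / 4 : ℝ) • K).PosSemidef ∧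
      ∀ l : ℕ, 1 ≤ l →
        (H - (1 / (2 * π * (2 * (l : ℝ) - 1) ^ 2)) •
            Matrix.of (fun i j => (K i j) ^ (2 * l))).PosSemidef := by
  have hπ : (0:ℝ) < π := Real.pi_pos
  have hKsymm : ∀ i j, K i j = K j i := by
    intro i j; rw [hK, hK, real_inner_comm]
  have hHsymm : ∀ i j, H i j = H j i := by
    intro i j; rw [hH, hH, hKsymm]
  have habs : ∀ i j, |K i j| ≤ 1 := by
    intro i j
    have := abs_real_inner_le_norm (x i) (x j)
    rwa [hx i, hx j, one_mul, ← hK] at this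
  have hdecomp : ∀ i j, H i j = K i j / 4 + K i j * Real.arcsin (K i j) / (2*π) := by
    intro i j
    rw [hH, Real.arccos]
    field_simp
    ring
  have hentry : ∀ i j, K i j * Real.arcsin (K i j)
      = ∑' k, a k * K i j ^ (2*k+2) := by
    intro i j
    rw [arcsin_eq_series ⟨neg_le_of_abs_le (habs i j), le_of_abs_le (habs i j)⟩,
      ← tsum_mul_left]
    apply tsum_congr
    intro k
    ring
  have hs0 : ∀ (i j : Fin n) (c : ℝ),
      Summable (fun k => c * (a k * K i j ^ (2*k+2))) := by
    intro i j c
    apply Summable.mul_left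
    apply Summable.of_norm_bounded summable_a
    intro k
    rw [Real.norm_eq_abs, abs_mul, abs_of_pos (a_pos k), abs_pow]
    calc a k * |K i j| ^ (2*k+2) ≤ a k * 1 := by
          exact mul_le_mul_of_nonneg_left
            (pow_le_one₀ (abs_nonneg _) (habs i j)) (a_pos k).le
      _ = a k := mul_one _
  -- nonnegativity of power quadratic forms
  have hQ : ∀ (m : ℕ) (v : Fin n → ℝ), 0 ≤ ∑ i, ∑ j, v i * v j * K i j ^ m := by
    intro m v
    have h := Stmt5.q_nonneg x v m
    have e : (∑ i, ∑ j, v i * v j * K i j ^ m)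
        = ∑ i, ∑ j, v i * v j * ((inner ℝ (x i) (x j) : ℝ)) ^ m :=
      Finset.sum_congr rfl fun i _ => Finset.sum_congr rfl fun j _ => by rw [hK]
    rw [e]; exact h
  -- quadratic form of H
  have hQH : ∀ v : Fin n → ℝ, ∑ i, ∑ j, v i * v j * H i j
      = (1/4) * (∑ i, ∑ j, v i * v j * K i j ^ 1)
        + (1/(2*π)) * ∑' k, a k * ∑ i, ∑ j, v i * v j * K i j ^ (2*k+2) := by
    intro v
    have step1 : ∑ i, ∑ j, v i * v j * H i j
        = (1/4) * (∑ i, ∑ j, v i * v j * K i j ^ 1)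
          + (1/(2*π)) * ∑ i, ∑ j, v i * v j * (K i j * Real.arcsin (K i j)) := by
      simp only [Finset.mul_sum, ← Finset.sum_add_distrib, pow_one]
      apply Finset.sum_congr rfl; intro i _
      apply Finset.sum_congr rfl; intro j _
      rw [hdecomp i j]
      field_simp
    have step2 : ∑ i, ∑ j, v i * v j * (K i j * Real.arcsin (K i j))
        = ∑' k, a k * ∑ i, ∑ j, v i * v j * K i j ^ (2*k+2) := by
      calc ∑ i, ∑ j, v i * v j * (K i j * Real.arcsin (K i j))
          = ∑ i, ∑ j, ∑' k, v i * v j * (a k * K i j ^ (2*k+2)) := by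
            apply Finset.sum_congr rfl; intro i _
            apply Finset.sum_congr rfl; intro j _
            rw [hentry i j, ← tsum_mul_left]
        _ = ∑ i, ∑' k, ∑ j, v i * v j * (a k * K i j ^ (2*k+2)) := by
            apply Finset.sum_congr rfl; intro i _
            exact (Summable.tsum_finsetSum (fun j _ => hs0 i j _)).symm
        _ = ∑' k, ∑ i, ∑ j, v i * v j * (a k * K i j ^ (2*k+2)) := by
            refine (Summable.tsum_finsetSum ?_).symm
            intro i _
            exact summable_sum (fun j _ => hs0 i j _)
        _ = ∑' k, a k * ∑ i, ∑ j, v i * v j * K i j ^ (2*k+2) := by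
            apply tsum_congr
            intro k
            simp only [Finset.mul_sum]
            apply Finset.sum_congr rfl; intro i _
            apply Finset.sum_congr rfl; intro j _
            ring
    rw [step1, step2]
  have hSnn : ∀ v : Fin n → ℝ,
      0 ≤ ∑' k, a k * ∑ i, ∑ j, v i * v j * K i j ^ (2*k+2) :=
    fun v => tsum_nonneg fun k => mul_nonneg (a_pos k).le (hQ _ v)
  constructor
  · refine Matrix.PosSemidef.of_dotProduct_mulVec_nonneg (herm_of_symm ?_) (fun v => ?_)
    · intro i j
      simp only [Matrix.sub_apply, Matrix.smul_apply, smul_eq_mul]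
      rw [hHsymm i j, hKsymm i j]
    · rw [quad_eq]
      have e : ∑ i, ∑ j, v i * v j * ((H - (1/4 : ℝ) • K) i j)
          = (∑ i, ∑ j, v i * v j * H i j)
            - (1/4) * (∑ i, ∑ j, v i * v j * K i j ^ 1) := by
        simp only [Matrix.sub_apply, Matrix.smul_apply, smul_eq_mul,
          Finset.mul_sum, ← Finset.sum_sub_distrib, pow_one]
        apply Finset.sum_congr rfl; intro i _
        apply Finset.sum_congr rfl; intro j _
        ring
      rw [e, hQH v]
      have := hSnn v
      have h2π : (0:ℝ) < 1/(2*π) := by positivity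
      nlinarith [hSnn v]
  · intro l hl
    set c : ℝ := 1 / (2 * π * (2 * (l:ℝ) - 1) ^ 2) with hc
    refine Matrix.PosSemidef.of_dotProduct_mulVec_nonneg (herm_of_symm ?_) (fun v => ?_)
    · intro i j
      simp only [Matrix.sub_apply, Matrix.smul_apply, smul_eq_mul,
        Matrix.of_apply]
      rw [hHsymm i j, hKsymm i j]
    · rw [quad_eq]
      have e : ∑ i, ∑ j, v i * v j
            * ((H - c • Matrix.of (fun i j => (K i j) ^ (2*l))) i j)
          = (∑ i, ∑ j, v i * v j * H i j)
            - c * (∑ i, ∑ j, v i * v j * K i j ^ (2*l)) := by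
        simp only [Matrix.sub_apply, Matrix.smul_apply, smul_eq_mul,
          Matrix.of_apply, Finset.mul_sum, ← Finset.sum_sub_distrib]
        apply Finset.sum_congr rfl; intro i _
        apply Finset.sum_congr rfl; intro j _
        ring
      rw [e, hQH v]
      -- the tsum dominates its (l-1)-st term
      have hterm : a (l-1) * (∑ i, ∑ j, v i * v j * K i j ^ (2*(l-1)+2))
          ≤ ∑' k, a k * ∑ i, ∑ j, v i * v j * K i j ^ (2*k+2) := by
        apply Summable.le_tsum (summable_aq K habs v) (l-1)
        intro k _
        exact mul_nonneg (a_pos k).le (hQ _ v)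
      have hee : 2*(l-1)+2 = 2*l := by omega
      rw [hee] at hterm
      have hcast : (2 * ((l-1 : ℕ) : ℝ) + 1) = 2*(l:ℝ) - 1 := by
        have : ((l-1 : ℕ) : ℝ) = (l:ℝ) - 1 := by
          rw [Nat.cast_sub hl]; norm_num
        rw [this]; ring
      have halb : 1 / (2*(l:ℝ) - 1)^2 ≤ a (l-1) := by
        have := a_lb (l-1)
        rwa [hcast] at this
      have hQl := hQ (2*l) v
      have hl1 : (1:ℝ) ≤ (l:ℝ) := by exact_mod_cast hl
      have hpos : (0:ℝ) < (2*(l:ℝ) - 1)^2 := by nlinarith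
      have key : c * (∑ i, ∑ j, v i * v j * K i j ^ (2*l))
          ≤ (1/(2*π)) * ∑' k, a k * ∑ i, ∑ j, v i * v j * K i j ^ (2*k+2) := by
        calc c * (∑ i, ∑ j, v i * v j * K i j ^ (2*l))
            = (1/(2*π)) * ((1/(2*(l:ℝ)-1)^2) * (∑ i, ∑ j, v i * v j * K i j ^ (2*l))) := by
              rw [hc]; field_simp
          _ ≤ (1/(2*π)) * (a (l-1) * (∑ i, ∑ j, v i * v j * K i j ^ (2*l))) := by
              apply mul_le_mul_of_nonneg_left _ (by positivity)
              exact mul_le_mul_of_nonneg_right halb hQl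
          _ ≤ (1/(2*π)) * ∑' k, a k * ∑ i, ∑ j, v i * v j * K i j ^ (2*k+2) := by
              apply mul_le_mul_of_nonneg_left hterm (by positivity)
      have hQ1 := hQ 1 v
      linarith
end
end

section
/- Let x₁,…,xₙ ∈ R^d be unit vectors with invertible ReLU-kernel Gram matrix H^∞. If yᵢ = α(βᵀxᵢ)^{2l} for all i, for some positive integer l, β ∈ R^d, α ∈ R, then yᵀ(H^∞)^{-1}y ≤ 2π(2l−1)²α²‖β‖₂^{4l}. -/
open Finset Real Matrix


private def cbS (m : ℕ) : ℕ := ∑ k ∈ range (m + 1), Nat.centralBinom k * Nat.centralBinom (m - k)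

private lemma cbSym (m : ℕ) :
    2 * (∑ k ∈ range (m + 1), k * (Nat.centralBinom k * Nat.centralBinom (m - k)))
      = m * cbS m := by
  have h1 : ∑ k ∈ range (m + 1), k * (Nat.centralBinom k * Nat.centralBinom (m - k))
      = ∑ k ∈ range (m + 1), (m - k) * (Nat.centralBinom (m - k) * Nat.centralBinom k) := by
    rw [← Finset.sum_range_reflect (fun k => (m - k) * (Nat.centralBinom (m - k) * Nat.centralBinom k)) (m + 1)]
    apply Finset.sum_congr rfl
    intro k hk
    simp only [Finset.mem_range] at hk
    have e1 : m + 1 - 1 - k = m - k := by omega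
    have e2 : m - (m - k) = k := by omega
    rw [e1, e2]
  have h2 : ∀ k ∈ range (m + 1),
      k * (Nat.centralBinom k * Nat.centralBinom (m - k))
      + (m - k) * (Nat.centralBinom (m - k) * Nat.centralBinom k)
      = m * (Nat.centralBinom k * Nat.centralBinom (m - k)) := by
    intro k hk
    simp only [Finset.mem_range] at hk
    have e : k + (m - k) = m := by omega
    calc k * (Nat.centralBinom k * Nat.centralBinom (m - k))
        + (m - k) * (Nat.centralBinom (m - k) * Nat.centralBinom k)
        = (k + (m - k)) * (Nat.centralBinom k * Nat.centralBinom (m - k)) := by ring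
      _ = m * (Nat.centralBinom k * Nat.centralBinom (m - k)) := by rw [e]
  calc 2 * (∑ k ∈ range (m + 1), k * (Nat.centralBinom k * Nat.centralBinom (m - k)))
      = (∑ k ∈ range (m + 1), k * (Nat.centralBinom k * Nat.centralBinom (m - k)))
        + ∑ k ∈ range (m + 1), (m - k) * (Nat.centralBinom (m - k) * Nat.centralBinom k) := by
        rw [← h1]; ring
    _ = ∑ k ∈ range (m + 1), m * (Nat.centralBinom k * Nat.centralBinom (m - k)) := by
        rw [← Finset.sum_add_distrib]; exact Finset.sum_congr rfl h2
    _ = m * cbS m := by rw [cbS, Finset.mul_sum]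

private lemma cbS_succ (n : ℕ) : cbS (n + 1) = 4 * cbS n := by
  have hrec : ∑ k ∈ range (n + 2), k * (Nat.centralBinom k * Nat.centralBinom (n + 1 - k))
      = 2 * (n + 1) * cbS n := by
    rw [Finset.sum_range_succ']
    simp only [Nat.zero_mul, add_zero]
    have step : ∀ k, (k + 1) * (Nat.centralBinom (k + 1) * Nat.centralBinom (n + 1 - (k + 1)))
        = 2 * (2 * k + 1) * Nat.centralBinom k * Nat.centralBinom (n - k) := by
      intro k
      have e : n + 1 - (k + 1) = n - k := by omega
      rw [e, ← mul_assoc, Nat.succ_mul_centralBinom_succ]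
    rw [Finset.sum_congr rfl (fun k _ => step k)]
    have expand : ∀ k ∈ range (n + 1),
        2 * (2 * k + 1) * Nat.centralBinom k * Nat.centralBinom (n - k)
        = 4 * (k * (Nat.centralBinom k * Nat.centralBinom (n - k)))
          + 2 * (Nat.centralBinom k * Nat.centralBinom (n - k)) := by
      intro k _; ring
    rw [Finset.sum_congr rfl expand, Finset.sum_add_distrib, ← Finset.mul_sum, ← Finset.mul_sum]
    have h := cbSym n
    have hcb : (∑ k ∈ range (n + 1), Nat.centralBinom k * Nat.centralBinom (n - k)) = cbS n := rfl
    rw [hcb]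
    calc 4 * ∑ k ∈ range (n + 1), k * (Nat.centralBinom k * Nat.centralBinom (n - k)) + 2 * cbS n
        = 2 * (2 * ∑ k ∈ range (n + 1), k * (Nat.centralBinom k * Nat.centralBinom (n - k)))
          + 2 * cbS n := by ring
      _ = 2 * (n * cbS n) + 2 * cbS n := by rw [h]
      _ = 2 * (n + 1) * cbS n := by ring
  have key := cbSym (n + 1)
  rw [hrec] at key
  have : (n + 1) * cbS (n + 1) = (n + 1) * (4 * cbS n) := by
    calc (n + 1) * cbS (n + 1) = 2 * (2 * (n + 1) * cbS n) := key.symm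
      _ = (n + 1) * (4 * cbS n) := by ring
  exact Nat.eq_of_mul_eq_mul_left (Nat.succ_pos n) this

/-- Convolution identity for central binomial coefficients. -/
private lemma centralBinom_convolution (n : ℕ) :
    ∑ k ∈ range (n + 1), Nat.centralBinom k * Nat.centralBinom (n - k) = 4 ^ n := by
  induction n with
  | zero => simp [Nat.centralBinom]
  | succ n ih =>
    have h := cbS_succ n
    rw [cbS, cbS] at h
    rw [h, ih]; ring

noncomputable def aa (k : ℕ) : ℝ := (Nat.centralBinom k : ℝ) / 4 ^ k
noncomputable def cc (k : ℕ) : ℝ := aa k / (2 * k + 1)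

lemma aa_nonneg (k : ℕ) : 0 ≤ aa k := by rw [aa]; positivity

lemma centralBinom_le_four_pow (k : ℕ) : Nat.centralBinom k ≤ 4 ^ k := by
  have h : (2 * k).choose k ≤ ∑ i ∈ range (2 * k + 1), (2 * k).choose i :=
    Finset.single_le_sum (fun i _ => Nat.zero_le _) (Finset.mem_range.mpr (by omega))
  have h2 : ∑ i ∈ range (2 * k + 1), (2 * k).choose i = 2 ^ (2 * k) := Nat.sum_range_choose _
  rw [Nat.centralBinom_eq_two_mul_choose]
  calc (2 * k).choose k ≤ 2 ^ (2 * k) := by rw [← h2]; exact h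
    _ = 4 ^ k := by rw [pow_mul]; norm_num

lemma aa_le_one (k : ℕ) : aa k ≤ 1 := by
  rw [aa, div_le_one (by positivity)]
  exact_mod_cast centralBinom_le_four_pow k

lemma cc_nonneg (k : ℕ) : 0 ≤ cc k := by
  have := aa_nonneg k; rw [cc]; positivity

lemma cc_le_one (k : ℕ) : cc k ≤ 1 := by
  rw [cc, div_le_one (by positivity)]
  have := aa_le_one k
  have h1 : (0 : ℝ) ≤ 2 * (k:ℝ) := by positivity
  linarith

lemma summable_aa_mul {x : ℝ} (hx0 : 0 ≤ x) (hx1 : x < 1) :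
    Summable fun k => aa k * x ^ k := by
  apply Summable.of_nonneg_of_le
    (fun k => mul_nonneg (aa_nonneg k) (pow_nonneg hx0 k))
    (fun k => ?_) (summable_geometric_of_lt_one hx0 hx1)
  calc aa k * x ^ k ≤ 1 * x ^ k :=
        mul_le_mul_of_nonneg_right (aa_le_one k) (pow_nonneg hx0 k)
    _ = x ^ k := one_mul _

/-- Binomial series for `(1-x)^(-1/2)`. -/
lemma hasSum_aa {x : ℝ} (hx0 : 0 ≤ x) (hx1 : x < 1) :
    HasSum (fun k => aa k * x ^ k) (Real.sqrt (1 - x))⁻¹ := by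
  have hsum := summable_aa_mul hx0 hx1
  set g : ℝ := ∑' k, aa k * x ^ k with hg
  have habs : Summable fun k => ‖aa k * x ^ k‖ := by
    have : ∀ k : ℕ, ‖aa k * x ^ k‖ = aa k * x ^ k := fun k =>
      abs_of_nonneg (mul_nonneg (aa_nonneg k) (pow_nonneg hx0 k))
    simpa [this] using hsum
  have hc : g * g = ∑' n : ℕ, ∑ k ∈ range (n + 1), (aa k * x ^ k) * (aa (n - k) * x ^ (n - k)) :=
    tsum_mul_tsum_eq_tsum_sum_range_of_summable_norm habs habs
  have hconv : ∀ n : ℕ, ∑ k ∈ range (n + 1), (aa k * x ^ k) * (aa (n - k) * x ^ (n - k))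
      = x ^ n := by
    intro n
    have hterm : ∀ k ∈ range (n + 1), (aa k * x ^ k) * (aa (n - k) * x ^ (n - k))
        = ((Nat.centralBinom k * Nat.centralBinom (n - k) : ℕ) : ℝ) / 4 ^ n * x ^ n := by
      intro k hk
      simp only [Finset.mem_range] at hk
      have hxpow : x ^ k * x ^ (n - k) = x ^ n := by
        rw [← pow_add]; congr 1; omega
      have h4 : (4:ℝ) ^ k * 4 ^ (n - k) = 4 ^ n := by
        rw [← pow_add]; congr 1; omega
      have e1 : (aa k * x ^ k) * (aa (n - k) * x ^ (n - k))
          = ((Nat.centralBinom k : ℝ) * (Nat.centralBinom (n - k)))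
            / ((4:ℝ) ^ k * 4 ^ (n - k)) * (x ^ k * x ^ (n - k)) := by
        rw [aa, aa]; ring
      rw [e1, hxpow, h4]
      push_cast
      ring
    rw [Finset.sum_congr rfl hterm, ← Finset.sum_mul, ← Finset.sum_div, ← Nat.cast_sum,
      centralBinom_convolution n]
    push_cast
    field_simp
  have hgeom : g * g = (1 - x)⁻¹ := by
    rw [hc, tsum_congr hconv, tsum_geometric_of_lt_one hx0 hx1]
  have hgpos : (1 : ℝ) ≤ g := by
    have h0 : aa 0 * x ^ 0 = 1 := by simp [aa, Nat.centralBinom]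
    calc (1:ℝ) = aa 0 * x ^ 0 := h0.symm
      _ ≤ g := Summable.le_tsum hsum 0
        (fun j _ => mul_nonneg (aa_nonneg j) (pow_nonneg hx0 j))
  have h1x : (0:ℝ) < 1 - x := by linarith
  have hsq : (Real.sqrt (1 - x) * g) ^ 2 = 1 := by
    rw [mul_pow, sq, sq, ← mul_assoc]
    rw [Real.mul_self_sqrt h1x.le]
    rw [mul_assoc, hgeom]
    field_simp
  have hprod : Real.sqrt (1 - x) * g = 1 := by
    have hp : 0 < Real.sqrt (1 - x) * g := by
      have := Real.sqrt_pos.mpr h1x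
      nlinarith
    nlinarith [hsq]
  have hgeq : g = (Real.sqrt (1 - x))⁻¹ := by
    have hs : Real.sqrt (1 - x) ≠ 0 := (Real.sqrt_pos.mpr h1x).ne'
    field_simp
    linarith [hprod]
  rw [← hgeq]
  exact hsum.hasSum

lemma cc_mul_eq_aa (k : ℕ) : cc k * (2 * (k:ℝ) + 1) = aa k := by
  rw [cc]; field_simp

lemma summable_cc_mul {t : ℝ} (h0 : 0 ≤ t) (h1 : t < 1) :
    Summable fun k => cc k * t ^ (2 * k + 1) := by
  have ht2 : t ^ 2 < 1 := by nlinarith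
  have ht20 : (0:ℝ) ≤ t ^ 2 := sq_nonneg t
  apply Summable.of_nonneg_of_le
    (fun k => mul_nonneg (cc_nonneg k) (pow_nonneg h0 _))
    (fun k => ?_) (summable_geometric_of_lt_one ht20 ht2)
  have e : t ^ (2 * k + 1) = (t ^ 2) ^ k * t := by
    rw [pow_succ, pow_mul]
  rw [e]
  calc cc k * ((t ^ 2) ^ k * t) ≤ 1 * ((t ^ 2) ^ k * 1) := by
        apply mul_le_mul (cc_le_one k) _ (by positivity) zero_le_one
        exact mul_le_mul_of_nonneg_left h1.le (by positivity)
    _ = (t ^ 2) ^ k := by ring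

lemma poly_hasDerivAt (N : ℕ) (s : ℝ) :
    HasDerivAt (fun s : ℝ => ∑ k ∈ range N, cc k * s ^ (2 * k + 1))
      (∑ k ∈ range N, aa k * (s ^ 2) ^ k) s := by
  have hterm : ∀ k ∈ range N, HasDerivAt (fun s : ℝ => cc k * s ^ (2 * k + 1))
      (aa k * (s ^ 2) ^ k) s := by
    intro k _
    have h := (hasDerivAt_pow (2 * k + 1) s).const_mul (cc k)
    have e : cc k * (↑(2 * k + 1) * s ^ (2 * k + 1 - 1)) = aa k * (s ^ 2) ^ k := by
      have e1 : 2 * k + 1 - 1 = 2 * k := rfl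
      rw [e1, ← pow_mul]
      push_cast
      calc cc k * ((2 * (k:ℝ) + 1) * s ^ (2 * k))
          = (cc k * (2 * (k:ℝ) + 1)) * s ^ (2 * k) := by ring
        _ = aa k * s ^ (2 * k) := by rw [cc_mul_eq_aa]
    rw [← e]
    exact h
  exact HasDerivAt.fun_sum hterm

lemma tail_bound {s t : ℝ} (hs0 : 0 ≤ s) (hst : s ≤ t) (h1 : t < 1) (N : ℕ) :
    (Real.sqrt (1 - s ^ 2))⁻¹ - ∑ k ∈ range N, aa k * (s ^ 2) ^ k
      ≤ (Real.sqrt (1 - t ^ 2))⁻¹ - ∑ k ∈ range N, aa k * (t ^ 2) ^ k := by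
  have hs1 : s < 1 := lt_of_le_of_lt hst h1
  have hs2 : s ^ 2 < 1 := by nlinarith
  have ht2 : t ^ 2 < 1 := by nlinarith
  have hs20 : (0:ℝ) ≤ s ^ 2 := sq_nonneg s
  have ht20 : (0:ℝ) ≤ t ^ 2 := sq_nonneg t
  have hAs := hasSum_aa hs20 hs2
  have hAt := hasSum_aa ht20 ht2
  have hAsums := summable_aa_mul hs20 hs2
  have hAsumt := summable_aa_mul ht20 ht2
  have hs' := Summable.sum_add_tsum_nat_add (f := fun k => aa k * (s^2)^k) N hAsums
  have ht' := Summable.sum_add_tsum_nat_add (f := fun k => aa k * (t^2)^k) N hAsumt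
  rw [hAs.tsum_eq] at hs'
  rw [hAt.tsum_eq] at ht'
  have htail : (∑' k : ℕ, aa (k + N) * (s^2)^(k+N)) ≤ ∑' k : ℕ, aa (k + N) * (t^2)^(k+N) := by
    apply Summable.tsum_le_tsum _ ((summable_nat_add_iff (f := fun k => aa k * (s^2)^k) N).mpr hAsums)
      ((summable_nat_add_iff (f := fun k => aa k * (t^2)^k) N).mpr hAsumt)
    intro k
    apply mul_le_mul_of_nonneg_left _ (aa_nonneg _)
    exact pow_le_pow_left₀ hs20 (by nlinarith) _
  linarith

lemma tail_nonneg {s : ℝ} (hs0 : 0 ≤ s) (hs1 : s < 1) (N : ℕ) :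
    0 ≤ (Real.sqrt (1 - s ^ 2))⁻¹ - ∑ k ∈ range N, aa k * (s ^ 2) ^ k := by
  have hs2 : s ^ 2 < 1 := by nlinarith
  have hs20 : (0:ℝ) ≤ s ^ 2 := sq_nonneg s
  have hAs := hasSum_aa hs20 hs2
  have hAsums := summable_aa_mul hs20 hs2
  have := Summable.sum_le_tsum (range N)
    (fun k _ => mul_nonneg (aa_nonneg k) (pow_nonneg hs20 k)) hAsums
  rw [hAs.tsum_eq] at this
  linarith

lemma arcsin_partial_est {t : ℝ} (h0 : 0 ≤ t) (h1 : t < 1) (N : ℕ) :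
    |arcsin t - ∑ k ∈ range N, cc k * t ^ (2 * k + 1)|
      ≤ ((Real.sqrt (1 - t ^ 2))⁻¹ - ∑ k ∈ range N, aa k * (t ^ 2) ^ k) * t := by
  have hder : ∀ s ∈ Set.Icc (0:ℝ) t,
      HasDerivWithinAt (fun s => arcsin s - ∑ k ∈ range N, cc k * s ^ (2 * k + 1))
        ((Real.sqrt (1 - s ^ 2))⁻¹ - ∑ k ∈ range N, aa k * (s ^ 2) ^ k)
        (Set.Icc (0:ℝ) t) s := by
    intro s hs
    obtain ⟨hs0, hst⟩ := hs
    have hs1 : s < 1 := lt_of_le_of_lt hst h1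
    have harc : HasDerivAt arcsin ((Real.sqrt (1 - s ^ 2))⁻¹) s := by
      have := Real.hasDerivAt_arcsin (by linarith : s ≠ -1) (by linarith : s ≠ 1)
      simpa [one_div] using this
    exact ((harc.sub (poly_hasDerivAt N s)).hasDerivWithinAt)
  have hbound : ∀ s ∈ Set.Icc (0:ℝ) t,
      ‖(Real.sqrt (1 - s ^ 2))⁻¹ - ∑ k ∈ range N, aa k * (s ^ 2) ^ k‖
        ≤ (Real.sqrt (1 - t ^ 2))⁻¹ - ∑ k ∈ range N, aa k * (t ^ 2) ^ k := by
    intro s hs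
    obtain ⟨hs0, hst⟩ := hs
    rw [Real.norm_eq_abs, abs_of_nonneg (tail_nonneg hs0 (lt_of_le_of_lt hst h1) N)]
    exact tail_bound hs0 hst h1 N
  have hmvt := (convex_Icc (0:ℝ) t).norm_image_sub_le_of_norm_hasDerivWithin_le
    hder hbound (Set.left_mem_Icc.mpr h0) (Set.right_mem_Icc.mpr h0)
  have hf0 : arcsin (0:ℝ) - ∑ k ∈ range N, cc k * (0:ℝ) ^ (2 * k + 1) = 0 := by
    simp
  rw [hf0] at hmvt
  simpa [Real.norm_eq_abs, abs_of_nonneg h0] using hmvt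

lemma hasSum_arcsin_aux {t : ℝ} (h0 : 0 ≤ t) (h1 : t < 1) :
    HasSum (fun k => cc k * t ^ (2 * k + 1)) (arcsin t) := by
  have ht2 : t ^ 2 < 1 := by nlinarith
  have ht20 : (0:ℝ) ≤ t ^ 2 := sq_nonneg t
  have hsum := summable_cc_mul h0 h1
  have hA := hasSum_aa ht20 ht2
  have hCN : Filter.Tendsto
      (fun N => ((Real.sqrt (1 - t ^ 2))⁻¹ - ∑ k ∈ range N, aa k * (t ^ 2) ^ k) * t)
      Filter.atTop (nhds 0) := by
    have h2 := (Filter.Tendsto.const_sub ((Real.sqrt (1 - t ^ 2))⁻¹)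
      hA.tendsto_sum_nat).mul_const t
    simpa using h2
  have hPN : Filter.Tendsto (fun N => ∑ k ∈ range N, cc k * t ^ (2 * k + 1))
      Filter.atTop (nhds (arcsin t)) := by
    have hdiff : Filter.Tendsto
        (fun N => (∑ k ∈ range N, cc k * t ^ (2 * k + 1)) - arcsin t)
        Filter.atTop (nhds 0) := by
      apply squeeze_zero_norm (fun N => ?_) hCN
      rw [Real.norm_eq_abs, abs_sub_comm]
      exact arcsin_partial_est h0 h1 N
    have := hdiff.add_const (arcsin t)
    simpa using this
  have heq : ∑' k, cc k * t ^ (2 * k + 1) = arcsin t :=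
    tendsto_nhds_unique hsum.hasSum.tendsto_sum_nat hPN
  rw [← heq]
  exact hsum.hasSum

lemma hasSum_cc : HasSum cc (π / 2) := by
  have hbound : ∀ N : ℕ, ∑ k ∈ range N, cc k ≤ π / 2 := by
    intro N
    have hcont : Filter.Tendsto (fun t : ℝ => ∑ k ∈ range N, cc k * t ^ (2 * k + 1))
        (nhdsWithin 1 (Set.Iio 1)) (nhds (∑ k ∈ range N, cc k * (1:ℝ) ^ (2 * k + 1))) := by
      apply Filter.Tendsto.mono_left _ nhdsWithin_le_nhds
      exact ((continuous_finset_sum (range N)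
        (fun k _ => continuous_const.mul (continuous_pow (2 * k + 1)))).tendsto 1)
    have hev : ∀ᶠ t : ℝ in nhdsWithin 1 (Set.Iio 1),
        ∑ k ∈ range N, cc k * t ^ (2 * k + 1) ≤ π / 2 := by
      filter_upwards [Ioo_mem_nhdsLT_of_mem
        (Set.mem_Ioc.mpr ⟨zero_lt_one, le_refl (1:ℝ)⟩)] with t ht
      obtain ⟨ht0, ht1⟩ := ht
      calc ∑ k ∈ range N, cc k * t ^ (2 * k + 1) ≤ arcsin t :=
            sum_le_hasSum (range N)
              (fun k _ => mul_nonneg (cc_nonneg k) (pow_nonneg ht0.le _))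
              (hasSum_arcsin_aux ht0.le ht1)
        _ ≤ π / 2 := arcsin_le_pi_div_two t
    have := le_of_tendsto hcont hev
    simpa using this
  have hsc : Summable cc := summable_of_sum_range_le cc_nonneg hbound
  have hL2 : ∑' k, cc k ≤ π / 2 := Real.tsum_le_of_sum_range_le cc_nonneg hbound
  have h2L : π / 2 ≤ ∑' k, cc k := by
    have harctend : Filter.Tendsto arcsin (nhdsWithin 1 (Set.Iio 1)) (nhds (π / 2)) := by
      have := (Real.continuous_arcsin.tendsto 1).mono_left
        (nhdsWithin_le_nhds (s := Set.Iio (1:ℝ)))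
      simpa [Real.arcsin_one] using this
    apply le_of_tendsto harctend
    filter_upwards [Ioo_mem_nhdsLT_of_mem
      (Set.mem_Ioc.mpr ⟨zero_lt_one, le_refl (1:ℝ)⟩)] with t ht
    obtain ⟨ht0, ht1⟩ := ht
    have h1 := (hasSum_arcsin_aux ht0.le ht1).tsum_eq
    rw [← h1]
    apply Summable.tsum_le_tsum _ (summable_cc_mul ht0.le ht1) hsc
    intro k
    calc cc k * t ^ (2 * k + 1) ≤ cc k * 1 := by
          apply mul_le_mul_of_nonneg_left _ (cc_nonneg k)
          exact pow_le_one₀ ht0.le ht1.le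
      _ = cc k := mul_one _
  have : ∑' k, cc k = π / 2 := le_antisymm hL2 h2L
  rw [← this]
  exact hsc.hasSum

lemma hasSum_arcsin_nonneg {t : ℝ} (h0 : 0 ≤ t) (h1 : t ≤ 1) :
    HasSum (fun k => cc k * t ^ (2 * k + 1)) (arcsin t) := by
  rcases lt_or_eq_of_le h1 with h | h
  · exact hasSum_arcsin_aux h0 h
  · subst h
    simpa [Real.arcsin_one] using hasSum_cc

lemma hasSum_arcsin {t : ℝ} (h0 : -1 ≤ t) (h1 : t ≤ 1) :
    HasSum (fun k => cc k * t ^ (2 * k + 1)) (arcsin t) := by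
  rcases le_or_gt 0 t with h | h
  · exact hasSum_arcsin_nonneg h h1
  · have hu0 : (0:ℝ) ≤ -t := by linarith
    have hu1 : -t ≤ 1 := by linarith
    have hneg := (hasSum_arcsin_nonneg hu0 hu1).neg
    have he : ∀ k : ℕ, -(cc k * (-t) ^ (2 * k + 1)) = cc k * t ^ (2 * k + 1) := by
      intro k
      rw [Odd.neg_pow (odd_two_mul_add_one k)]
      ring
    have he2 : -arcsin (-t) = arcsin t := by
      rw [Real.arcsin_neg]; ring
    rw [← he2]
    simpa [he] using hneg

/-- quadratic form of an `n × n` array of reals -/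
def QF {n : ℕ} (A : Fin n → Fin n → ℝ) (z : Fin n → ℝ) : ℝ :=
  ∑ i, ∑ j, z i * z j * A i j

lemma QF_add {n : ℕ} (A B : Fin n → Fin n → ℝ) (z : Fin n → ℝ) :
    QF (fun i j => A i j + B i j) z = QF A z + QF B z := by
  simp [QF, mul_add, Finset.sum_add_distrib]

/-- Schur-type lemma: the entrywise product of a Gram matrix with a positive
semidefinite array has nonnegative quadratic form. -/
lemma QF_gram_mul {n m : ℕ} (u : Fin n → Fin m → ℝ) (B : Fin n → Fin n → ℝ)
    (hB : ∀ w, 0 ≤ QF B w) (z : Fin n → ℝ) :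
    0 ≤ QF (fun i j => (∑ k, u i k * u j k) * B i j) z := by
  have key : QF (fun i j => (∑ k, u i k * u j k) * B i j) z
      = ∑ k, QF B (fun i => z i * u i k) := by
    unfold QF
    have e1 : ∀ i j : Fin n, z i * z j * ((∑ k, u i k * u j k) * B i j)
        = ∑ k, (z i * u i k) * (z j * u j k) * B i j := by
      intro i j
      rw [Finset.sum_mul, Finset.mul_sum]
      exact Finset.sum_congr rfl fun k _ => by ring
    calc ∑ i, ∑ j, z i * z j * ((∑ k, u i k * u j k) * B i j)
        = ∑ i, ∑ j, ∑ k, (z i * u i k) * (z j * u j k) * B i j := by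
          exact Finset.sum_congr rfl fun i _ => Finset.sum_congr rfl fun j _ => e1 i j
      _ = ∑ i, ∑ k, ∑ j, (z i * u i k) * (z j * u j k) * B i j := by
          exact Finset.sum_congr rfl fun i _ => Finset.sum_comm
      _ = ∑ k, ∑ i, ∑ j, (z i * u i k) * (z j * u j k) * B i j := Finset.sum_comm
  rw [key]
  exact Finset.sum_nonneg fun k _ => hB _

lemma QF_ones {n : ℕ} (z : Fin n → ℝ) : 0 ≤ QF (fun _ _ => (1:ℝ)) z := by
  have : QF (fun _ _ => (1:ℝ)) z = (∑ i, z i) ^ 2 := by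
    rw [QF, sq, Finset.sum_mul]
    exact Finset.sum_congr rfl fun i _ => by rw [Finset.mul_sum]; simp [mul_one]
  rw [this]; exact sq_nonneg _

section Geom
variable {d n : ℕ}

lemma inner_eq_sum (x : Fin n → EuclideanSpace ℝ (Fin d)) (i j : Fin n) :
    (inner ℝ (x i) (x j) : ℝ) = ∑ k, x i k * x j k := by
  simp [PiLp.inner_apply, RCLike.inner_apply, conj_trivial, mul_comm]

lemma QF_pow (x : Fin n → EuclideanSpace ℝ (Fin d)) (m : ℕ) :
    ∀ z : Fin n → ℝ, 0 ≤ QF (fun i j => (inner ℝ (x i) (x j) : ℝ) ^ (m + 1)) z := by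
  induction m with
  | zero =>
    intro z
    have h := QF_gram_mul (fun i k => x i k) (fun _ _ => (1:ℝ)) QF_ones z
    have e : (fun i j => (∑ k, x i k * x j k) * (1:ℝ))
        = fun i j : Fin n => (inner ℝ (x i) (x j) : ℝ) ^ (0 + 1) := by
      funext i j
      rw [mul_one, inner_eq_sum, pow_one]
    rwa [e] at h
  | succ m ih =>
    intro z
    have h := QF_gram_mul (fun i k => x i k)
      (fun i j => (inner ℝ (x i) (x j) : ℝ) ^ (m + 1)) ih z
    have e : (fun i j => (∑ k, x i k * x j k) * (inner ℝ (x i) (x j) : ℝ) ^ (m + 1))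
        = fun i j : Fin n => (inner ℝ (x i) (x j) : ℝ) ^ (m + 1 + 1) := by
      funext i j
      rw [← inner_eq_sum, ← pow_succ']
    rwa [e] at h

lemma QF_rank_one (f : Fin n → ℝ) (z : Fin n → ℝ) :
    QF (fun i j => f i * f j) z = (∑ i, z i * f i) ^ 2 := by
  rw [QF, sq, Finset.sum_mul]
  apply Finset.sum_congr rfl
  intro i _
  rw [Finset.mul_sum]
  exact Finset.sum_congr rfl fun j _ => by ring

lemma QF_base (x : Fin n → EuclideanSpace ℝ (Fin d)) (β : EuclideanSpace ℝ (Fin d))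
    (z : Fin n → ℝ) :
    0 ≤ QF (fun i j => ‖β‖ ^ 2 * (inner ℝ (x i) (x j) : ℝ)
        - (inner ℝ β (x i) : ℝ) * (inner ℝ β (x j) : ℝ)) z := by
  set w : EuclideanSpace ℝ (Fin d) := ∑ i, z i • x i with hw
  have hQt : QF (fun i j => (inner ℝ (x i) (x j) : ℝ)) z = (inner ℝ w w : ℝ) := by
    rw [QF, hw]
    simp only [sum_inner, inner_sum, real_inner_smul_left, real_inner_smul_right,
      Finset.mul_sum]
    apply Finset.sum_congr rfl
    intro i _
    apply Finset.sum_congr rfl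
    intro j _
    rw [real_inner_comm (x j) (x i)]
    ring
  have hv : (∑ i, z i * (inner ℝ β (x i) : ℝ)) = (inner ℝ β w : ℝ) := by
    rw [hw]
    simp only [inner_sum, real_inner_smul_right]
  have hcs := real_inner_mul_inner_self_le β w
  have hsplit : QF (fun i j => ‖β‖ ^ 2 * (inner ℝ (x i) (x j) : ℝ)
      - (inner ℝ β (x i) : ℝ) * (inner ℝ β (x j) : ℝ)) z
      = ‖β‖ ^ 2 * QF (fun i j => (inner ℝ (x i) (x j) : ℝ)) z
        - QF (fun i j => (inner ℝ β (x i) : ℝ) * (inner ℝ β (x j) : ℝ)) z := by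
    rw [QF, QF, QF, Finset.mul_sum, ← Finset.sum_sub_distrib]
    apply Finset.sum_congr rfl
    intro i _
    rw [Finset.mul_sum, ← Finset.sum_sub_distrib]
    exact Finset.sum_congr rfl fun j _ => by ring
  rw [hsplit, hQt, QF_rank_one, hv]
  have hb : (inner ℝ β β : ℝ) = ‖β‖ ^ 2 := real_inner_self_eq_norm_sq β
  have hw2 : (inner ℝ w w : ℝ) = ‖w‖ ^ 2 := real_inner_self_eq_norm_sq w
  nlinarith [hcs, sq_nonneg ((inner ℝ β w : ℝ))]

lemma QF_dom (x : Fin n → EuclideanSpace ℝ (Fin d)) (β : EuclideanSpace ℝ (Fin d)) (m : ℕ) :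
    ∀ z : Fin n → ℝ, 0 ≤ QF (fun i j =>
      (‖β‖ ^ 2 * (inner ℝ (x i) (x j) : ℝ)) ^ (m + 1)
        - ((inner ℝ β (x i) : ℝ) * (inner ℝ β (x j) : ℝ)) ^ (m + 1)) z := by
  induction m with
  | zero =>
    intro z
    have h := QF_base x β z
    have e : (fun i j => ‖β‖ ^ 2 * (inner ℝ (x i) (x j) : ℝ)
        - (inner ℝ β (x i) : ℝ) * (inner ℝ β (x j) : ℝ))
        = fun i j : Fin n => (‖β‖ ^ 2 * (inner ℝ (x i) (x j) : ℝ)) ^ (0 + 1)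
          - ((inner ℝ β (x i) : ℝ) * (inner ℝ β (x j) : ℝ)) ^ (0 + 1) := by
      funext i j; rw [pow_one, pow_one]
    rwa [e] at h
  | succ m ih =>
    intro z
    -- first piece : B ⊙ (B^{m+1} - A^{m+1})
    have h1 : 0 ≤ QF (fun i j => (∑ k, (‖β‖ * x i k) * (‖β‖ * x j k)) *
        ((‖β‖ ^ 2 * (inner ℝ (x i) (x j) : ℝ)) ^ (m + 1)
          - ((inner ℝ β (x i) : ℝ) * (inner ℝ β (x j) : ℝ)) ^ (m + 1))) z :=
      QF_gram_mul _ _ ih z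
    -- second piece : (B - A) ⊙ A^{m+1}
    have h2 : 0 ≤ QF (fun i j =>
        (∑ k : Fin 1, (fun _ : Fin 1 => (inner ℝ β (x i) : ℝ) ^ (m + 1)) k
            * (fun _ : Fin 1 => (inner ℝ β (x j) : ℝ) ^ (m + 1)) k) *
        (‖β‖ ^ 2 * (inner ℝ (x i) (x j) : ℝ)
          - (inner ℝ β (x i) : ℝ) * (inner ℝ β (x j) : ℝ))) z := by
      apply QF_gram_mul (fun i (_ : Fin 1) => (inner ℝ β (x i) : ℝ) ^ (m + 1))
      exact QF_base x β
    have hsum := add_nonneg h1 h2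
    rw [← QF_add] at hsum
    have e : (fun i j => (∑ k, (‖β‖ * x i k) * (‖β‖ * x j k)) *
        ((‖β‖ ^ 2 * (inner ℝ (x i) (x j) : ℝ)) ^ (m + 1)
          - ((inner ℝ β (x i) : ℝ) * (inner ℝ β (x j) : ℝ)) ^ (m + 1))
        + (∑ k : Fin 1, (fun _ : Fin 1 => (inner ℝ β (x i) : ℝ) ^ (m + 1)) k
            * (fun _ : Fin 1 => (inner ℝ β (x j) : ℝ) ^ (m + 1)) k) *
        (‖β‖ ^ 2 * (inner ℝ (x i) (x j) : ℝ)
          - (inner ℝ β (x i) : ℝ) * (inner ℝ β (x j) : ℝ)))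
        = fun i j : Fin n =>
          (‖β‖ ^ 2 * (inner ℝ (x i) (x j) : ℝ)) ^ (m + 1 + 1)
            - ((inner ℝ β (x i) : ℝ) * (inner ℝ β (x j) : ℝ)) ^ (m + 1 + 1) := by
      funext i j
      have egram : (∑ k, (‖β‖ * x i k) * (‖β‖ * x j k))
          = ‖β‖ ^ 2 * (inner ℝ (x i) (x j) : ℝ) := by
        rw [inner_eq_sum, Finset.mul_sum]
        exact Finset.sum_congr rfl fun k _ => by ring
      rw [egram, Fin.sum_univ_one]
      ring
    rwa [e] at hsum
end Geom

lemma QF_sub {n : ℕ} (A B : Fin n → Fin n → ℝ) (z : Fin n → ℝ) :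
    QF (fun i j => A i j - B i j) z = QF A z - QF B z := by
  simp [QF, mul_sub, Finset.sum_sub_distrib]

lemma QF_smul {n : ℕ} (c : ℝ) (A : Fin n → Fin n → ℝ) (z : Fin n → ℝ) :
    QF (fun i j => c * A i j) z = c * QF A z := by
  simp only [QF, Finset.mul_sum]
  exact Finset.sum_congr rfl fun i _ => Finset.sum_congr rfl fun j _ => by ring

/-- If `yᵢ = α⟨β, xᵢ⟩^{2l}` for unit vectors `xᵢ` with positive definite
ReLU-kernel Gram matrix `H^∞`, then `yᵀ(H^∞)⁻¹y ≤ 2π(2l−1)²α²‖β‖^{4l}`. -/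
theorem stmt_7 (d n : ℕ) (x : Fin n → EuclideanSpace ℝ (Fin d))
    (hx : ∀ i, ‖x i‖ = 1)
    (H : Matrix (Fin n) (Fin n) ℝ)
    (hH : ∀ i j, H i j = (inner ℝ (x i) (x j) : ℝ) *
        (π - arccos (inner ℝ (x i) (x j))) / (2 * π))
    (hHpd : H.PosDef)
    (l : ℕ) (hl : 1 ≤ l)
    (α : ℝ) (β : EuclideanSpace ℝ (Fin d)) (y : Fin n → ℝ)
    (hy : ∀ i, y i = α * (inner ℝ β (x i) : ℝ) ^ (2 * l)) :
    y ⬝ᵥ (H⁻¹ *ᵥ y) ≤ 2 * π * (2 * (l : ℝ) - 1) ^ 2 * α ^ 2 * ‖β‖ ^ (4 * l) := by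
  have hpi : (0:ℝ) < π := Real.pi_pos
  set z : Fin n → ℝ := H⁻¹ *ᵥ y with hz
  set s : ℝ := y ⬝ᵥ (H⁻¹ *ᵥ y) with hsdef
  set m : ℕ := l - 1 with hm
  -- H z = y
  have hdet : IsUnit H.det := hHpd.det_pos.ne'.isUnit
  have hHz : H *ᵥ z = y := by
    rw [hz, Matrix.mulVec_mulVec, Matrix.mul_nonsing_inv _ hdet, Matrix.one_mulVec]
  -- s = QF H z and s = ∑ z i * y i
  have hzy : ∑ i, z i * y i = s := by
    rw [hsdef, dotProduct]
    exact Finset.sum_congr rfl fun i _ => by ring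
  have hQH : QF (fun i j => H i j) z = s := by
    rw [QF, ← hzy]
    apply Finset.sum_congr rfl
    intro i _
    have hyi : y i = ∑ j, H i j * z j := by
      rw [← hHz]; rfl
    rw [hyi, Finset.mul_sum]
    exact Finset.sum_congr rfl fun j _ => by ring
  -- series inequality : cc m * QF (t^(2m+2)) z ≤ 2π s
  have hb : ∀ i j, -1 ≤ (inner ℝ (x i) (x j) : ℝ) ∧ (inner ℝ (x i) (x j) : ℝ) ≤ 1 := by
    intro i j
    have h := abs_real_inner_le_norm (x i) (x j)
    rw [hx i, hx j, mul_one] at h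
    exact abs_le.mp h
  have hij : ∀ i j : Fin n, HasSum
      (fun k => z i * z j * (inner ℝ (x i) (x j) : ℝ)
        * (cc k * (inner ℝ (x i) (x j) : ℝ) ^ (2 * k + 1)))
      (z i * z j * (inner ℝ (x i) (x j) : ℝ) * arcsin (inner ℝ (x i) (x j) : ℝ)) :=
    fun i j => (hasSum_arcsin (hb i j).1 (hb i j).2).mul_left _
  have hsum1 : HasSum
      (fun k => ∑ i, ∑ j, z i * z j * (inner ℝ (x i) (x j) : ℝ)
        * (cc k * (inner ℝ (x i) (x j) : ℝ) ^ (2 * k + 1)))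
      (∑ i, ∑ j, z i * z j * (inner ℝ (x i) (x j) : ℝ) * arcsin (inner ℝ (x i) (x j) : ℝ)) :=
    hasSum_sum fun i _ => hasSum_sum fun j _ => hij i j
  have eterm : (fun k => ∑ i, ∑ j, z i * z j * (inner ℝ (x i) (x j) : ℝ)
        * (cc k * (inner ℝ (x i) (x j) : ℝ) ^ (2 * k + 1)))
      = fun k => cc k * QF (fun i j => (inner ℝ (x i) (x j) : ℝ) ^ (2 * k + 1 + 1)) z := by
    funext k
    rw [QF, Finset.mul_sum]
    apply Finset.sum_congr rfl
    intro i _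
    rw [Finset.mul_sum]
    apply Finset.sum_congr rfl
    intro j _
    ring
  rw [eterm] at hsum1
  have hterm_nonneg : ∀ k : ℕ,
      0 ≤ cc k * QF (fun i j => (inner ℝ (x i) (x j) : ℝ) ^ (2 * k + 1 + 1)) z :=
    fun k => mul_nonneg (cc_nonneg k) (QF_pow x (2 * k + 1) z)
  have hkey := le_hasSum hsum1 m (fun k _ => hterm_nonneg k)
  -- W ≤ 2π s
  have hW : ∑ i, ∑ j, z i * z j * (inner ℝ (x i) (x j) : ℝ) * arcsin (inner ℝ (x i) (x j) : ℝ)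
      ≤ 2 * π * s := by
    have hsplit : 2 * π * QF (fun i j => H i j) z
        = (π / 2) * QF (fun i j => (inner ℝ (x i) (x j) : ℝ) ^ (0 + 1)) z
          + ∑ i, ∑ j, z i * z j * (inner ℝ (x i) (x j) : ℝ)
            * arcsin (inner ℝ (x i) (x j) : ℝ) := by
      rw [QF, QF, Finset.mul_sum, Finset.mul_sum, ← Finset.sum_add_distrib]
      apply Finset.sum_congr rfl
      intro i _
      rw [Finset.mul_sum, Finset.mul_sum, ← Finset.sum_add_distrib]
      apply Finset.sum_congr rfl
      intro j _
      rw [hH i j, Real.arccos_eq_pi_div_two_sub_arcsin, pow_one]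
      field_simp
      ring
    have h0 : 0 ≤ QF (fun i j => (inner ℝ (x i) (x j) : ℝ) ^ (0 + 1)) z := QF_pow x 0 z
    rw [hQH] at hsplit
    nlinarith [hsplit, h0, hpi]
  have hkey2 : cc m * QF (fun i j => (inner ℝ (x i) (x j) : ℝ) ^ (2 * m + 1 + 1)) z
      ≤ 2 * π * s := le_trans hkey hW
  have hexp : 2 * m + 1 + 1 = 2 * l := by omega
  rw [hexp] at hkey2
  -- domination : s^2 ≤ α² ‖β‖^{4l} QF (t^{2l}) z
  have hzy2 : s = α * ∑ i, z i * (inner ℝ β (x i) : ℝ) ^ (2 * l) := by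
    rw [← hzy, Finset.mul_sum]
    exact Finset.sum_congr rfl fun i _ => by rw [hy i]; ring
  have hrank : (∑ i, z i * (inner ℝ β (x i) : ℝ) ^ (2 * l)) ^ 2
      = QF (fun i j => (inner ℝ β (x i) : ℝ) ^ (2 * l) * (inner ℝ β (x j) : ℝ) ^ (2 * l)) z :=
    (QF_rank_one (fun i => (inner ℝ β (x i) : ℝ) ^ (2 * l)) z).symm
  have hdom := QF_dom x β (2 * l - 1) z
  have hexp2 : 2 * l - 1 + 1 = 2 * l := by omega
  rw [hexp2] at hdom
  rw [QF_sub] at hdom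
  have escale : QF (fun i j => (‖β‖ ^ 2 * (inner ℝ (x i) (x j) : ℝ)) ^ (2 * l)) z
      = ‖β‖ ^ (4 * l) * QF (fun i j => (inner ℝ (x i) (x j) : ℝ) ^ (2 * l)) z := by
    have e : (fun i j => (‖β‖ ^ 2 * (inner ℝ (x i) (x j) : ℝ)) ^ (2 * l))
        = fun i j : Fin n => ‖β‖ ^ (4 * l) * (inner ℝ (x i) (x j) : ℝ) ^ (2 * l) := by
      funext i j
      rw [mul_pow, ← pow_mul]
      congr 2
      omega
    rw [e, QF_smul]
  have emulpow : (fun i j => ((inner ℝ β (x i) : ℝ) * (inner ℝ β (x j) : ℝ)) ^ (2 * l))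
      = fun i j : Fin n => (inner ℝ β (x i) : ℝ) ^ (2 * l) * (inner ℝ β (x j) : ℝ) ^ (2 * l) := by
    funext i j; rw [mul_pow]
  rw [emulpow, escale] at hdom
  have hs2 : s ^ 2 ≤ α ^ 2 * (‖β‖ ^ (4 * l)
      * QF (fun i j => (inner ℝ (x i) (x j) : ℝ) ^ (2 * l)) z) := by
    rw [hzy2, mul_pow, hrank]
    have := mul_le_mul_of_nonneg_left (by linarith [hdom] :
      QF (fun i j => (inner ℝ β (x i) : ℝ) ^ (2 * l) * (inner ℝ β (x j) : ℝ) ^ (2 * l)) z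
        ≤ ‖β‖ ^ (4 * l) * QF (fun i j => (inner ℝ (x i) (x j) : ℝ) ^ (2 * l)) z)
      (sq_nonneg α)
    exact this
  -- numeric inequality : 1 ≤ (2l-1)^2 * cc m
  have hccpos : 0 < cc m := by
    rw [cc, aa]
    have := Nat.centralBinom_pos m
    positivity
  have hmcast : ((m:ℝ)) = (l:ℝ) - 1 := by
    rw [hm, Nat.cast_sub hl, Nat.cast_one]
  have hq : 2 * (l:ℝ) - 1 = 2 * (m:ℝ) + 1 := by rw [hmcast]; ring
  have hnat : (4:ℝ) ^ m ≤ (2 * (m:ℝ) + 1) * (Nat.centralBinom m : ℝ) := by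
    have h := Nat.four_pow_le_two_mul_add_one_mul_central_binom m
    have : (4:ℕ) ^ m ≤ (2 * m + 1) * Nat.centralBinom m := by
      rwa [Nat.centralBinom_eq_two_mul_choose]
    exact_mod_cast this
  have hcc1 : 1 ≤ (2 * (l:ℝ) - 1) ^ 2 * cc m := by
    rw [hq, cc, aa, div_div, ← mul_div_assoc, le_div_iff₀ (by positivity), one_mul]
    have hcb : (0:ℝ) ≤ (Nat.centralBinom m : ℝ) := Nat.cast_nonneg _
    nlinarith [hnat, hcb, sq_nonneg (2 * (m:ℝ) + 1)]
  -- conclude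
  have hQP : 0 ≤ QF (fun i j => (inner ℝ (x i) (x j) : ℝ) ^ (2 * l)) z := by
    have h := QF_pow x (2 * l - 1) z
    rwa [hexp2] at h
  have hs0 : 0 ≤ s := by nlinarith [hkey2, mul_nonneg (cc_nonneg m) hQP, hpi]
  clear_value z s m
  generalize hgen : QF (fun i j => (inner ℝ (x i) (x j) : ℝ) ^ (2 * l)) z = Qp at hs2 hkey2 hQP
  rcases hs0.eq_or_lt with h | hspos
  · rw [← h]
    positivity
  · have hN : (0:ℝ) ≤ α ^ 2 * ‖β‖ ^ (4 * l) := by positivity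
    have e1 : cc m * s ^ 2 ≤ α ^ 2 * ‖β‖ ^ (4 * l) * (2 * π * s) := by
      have eA := mul_le_mul_of_nonneg_left hs2 (cc_nonneg m)
      have eB := mul_le_mul_of_nonneg_left hkey2 hN
      linarith [eA, eB]
    have e2 : s ^ 2 ≤ (2 * (l:ℝ) - 1) ^ 2 * cc m * s ^ 2 :=
      le_mul_of_one_le_left (sq_nonneg s) hcc1
    have e2b := mul_le_mul_of_nonneg_left e1 (sq_nonneg (2 * (l:ℝ) - 1))
    have e3 : s ^ 2 ≤ (2 * (l:ℝ) - 1) ^ 2 * (α ^ 2 * ‖β‖ ^ (4 * l) * (2 * π * s)) := by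
      linarith [e2, e2b]
    have e4 : s * s ≤ (2 * π * (2 * (l:ℝ) - 1) ^ 2 * α ^ 2 * ‖β‖ ^ (4 * l)) * s := by
      have er : (2 * (l:ℝ) - 1) ^ 2 * (α ^ 2 * ‖β‖ ^ (4 * l) * (2 * π * s))
          = (2 * π * (2 * (l:ℝ) - 1) ^ 2 * α ^ 2 * ‖β‖ ^ (4 * l)) * s := by ring
      calc s * s = s ^ 2 := (sq s).symm
        _ ≤ _ := e3
        _ = _ := er
    exact le_of_mul_le_mul_right e4 hspos
end
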